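/- Let X• be a 2-Segal simplicial set and let F• = ∂_{last}: P▷X• → X• be its right path space (so (P▷X)_n = X_{n+1}, ∂_i^▷ = ∂_i for 0 ≤ i ≤ n, and F_n = ∂_{n+1}). Then for every n ≥ 1 the square ((P▷X)_n → (P▷X)_{{0,n}}, (P▷X)_n → X_n, (P▷X)_{{0,n}} → X_{{0,n}}, X_n → X_{{0,n}}) is a pullback of sets; explicitly, the map X_{n+1} → X_n ×_{X_{{0,n}}} X_{{0,n,n+1}} is a bijection, which is an instance of the 2-Segal condition for X•. -/

import Mathlib

open CategoryTheory Simplicial SimplexCategory Opposite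

namespace RelSegal

/-- The morphism `[m] ⟶ [n]` in the simplex category determined by a monotone `ℕ`-valued map. -/
def natHom (m n : ℕ) (f : ℕ → ℕ) (hf : Monotone f) (h : f m ≤ n) :
    (⦋m⦌ : SimplexCategory) ⟶ ⦋n⦌ :=
  SimplexCategory.mkHom
    { toFun := fun k => ⟨f k.1, by have := hf (Nat.lt_succ_iff.mp k.2); omega⟩
      monotone' := fun a b hab => by
        simp only [Fin.mk_le_mk]; exact hf hab }

/-- Restriction of simplices along a morphism of the simplex category. -/
def rmap (X : SSet) {m n : ℕ} (φ : (⦋m⦌ : SimplexCategory) ⟶ ⦋n⦌) :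
    X.obj (op ⦋n⦌) → X.obj (op ⦋m⦌) := X.map φ.op

/-- The inclusion of the vertex `i` of `[n]`. -/
def vert (n i : ℕ) (h : i ≤ n) : (⦋0⦌ : SimplexCategory) ⟶ ⦋n⦌ :=
  natHom 0 n (fun _ => i) monotone_const h

/-- The inclusion of the edge `{i,j}` of `[n]`. -/
def edge (n i j : ℕ) (hij : i ≤ j) (hj : j ≤ n) : (⦋1⦌ : SimplexCategory) ⟶ ⦋n⦌ :=
  natHom 1 n (fun k => i + k * (j - i))
    (fun a b hab => by
      have := Nat.mul_le_mul_right (j - i) hab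
      show i + a * (j - i) ≤ i + b * (j - i); omega)
    (by show i + 1 * (j - i) ≤ n; omega)

/-- The inclusion of the interval `{i, i+1, …, j}` of `[n]`. -/
def interval (n i j : ℕ) (hij : i ≤ j) (hj : j ≤ n) : (⦋j - i⦌ : SimplexCategory) ⟶ ⦋n⦌ :=
  natHom (j - i) n (fun k => i + k) (fun a b hab => by show i + a ≤ i + b; omega)
    (by show i + (j - i) ≤ n; omega)

/-- A commutative square of sets which is a pullback: the canonical map into the fibre
product is a bijection. -/
def IsSetPullback {A B C D : Type*} (p : A → B) (q : A → C) (g : B → D) (h : C → D) : Prop :=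
  (∀ a, g (p a) = h (q a)) ∧ ∀ b c, g b = h c → ∃! a, p a = b ∧ q a = c

/-- A simplicial set is `1`-Segal if for every `n ≥ 2` the Segal map
`X_n → X_1 ×_{X_0} ⋯ ×_{X_0} X_1` is a bijection (injectivity together with
surjectivity onto the compatible families). -/
def Is1Segal (X : SSet) : Prop :=
  ∀ n, 2 ≤ n →
    (∀ x y : X.obj (op ⦋n⦌),
      (∀ i (hi : i + 1 ≤ n),
        rmap X (edge n i (i + 1) (by omega) hi) x = rmap X (edge n i (i + 1) (by omega) hi) y) →
      x = y) ∧
    (∀ f : ∀ i, i + 1 ≤ n → X.obj (op ⦋1⦌),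
      (∀ i (h1 : i + 1 ≤ n) (h2 : (i + 1) + 1 ≤ n),
        rmap X (vert 1 1 le_rfl) (f i h1) = rmap X (vert 1 0 (by omega)) (f (i + 1) h2)) →
      ∃ x : X.obj (op ⦋n⦌), ∀ i (hi : i + 1 ≤ n),
        rmap X (edge n i (i + 1) (by omega) hi) x = f i hi)

/-- The inclusion of the subset `{0, …, i, j, …, n}` of `[n]`. -/
def outer (n i j : ℕ) (hij : i < j) (hj : j ≤ n) :
    (⦋n - j + i + 1⦌ : SimplexCategory) ⟶ ⦋n⦌ :=
  natHom (n - j + i + 1) n (fun k => if k ≤ i then k else k + (j - i - 1))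
    (fun a b hab => by dsimp only; split_ifs <;> omega)
    (by split_ifs <;> omega)

/-- A simplicial set is `2`-Segal if for every `n ≥ 3` and `0 ≤ i < j ≤ n` the map
`X_n → X_{{i,…,j}} ×_{X_{{i,j}}} X_{{0,…,i,j,…,n}}` is a bijection. -/
def Is2Segal (X : SSet) : Prop :=
  ∀ n i j (_ : 3 ≤ n) (hij : i < j) (hj : j ≤ n),
    IsSetPullback
      (rmap X (interval n i j hij.le hj))
      (rmap X (outer n i j hij hj))
      (rmap X (edge (j - i) 0 (j - i) (Nat.zero_le _) le_rfl))
      (rmap X (edge (n - j + i + 1) i (i + 1) (by omega) (by omega)))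

/-- The inclusion `[2] ⟶ [n+1]` with vertices `0, n, n+1`. -/
def triMap (n : ℕ) : (⦋2⦌ : SimplexCategory) ⟶ ⦋n + 1⦌ :=
  natHom 2 (n + 1) (fun k => if k = 0 then 0 else if k = 1 then n else n + 1)
    (fun a b hab => by dsimp only; split_ifs <;> omega)
    (by split_ifs <;> omega)


lemma hom_ext {m n : ℕ} (f g : (⦋m⦌ : SimplexCategory) ⟶ ⦋n⦌)
    (h : ∀ k, (f.toOrderHom k : ℕ) = g.toOrderHom k) : f = g := by
  ext k : 3
  exact Fin.ext (h k)

lemma rmap_comp (X : SSet) {a b c : ℕ} (φ : (⦋a⦌ : SimplexCategory) ⟶ ⦋b⦌)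
    (ψ : (⦋b⦌ : SimplexCategory) ⟶ ⦋c⦌) (x) :
    rmap X (φ ≫ ψ) x = rmap X φ (rmap X ψ x) := by
  simp [rmap, op_comp, X.map_comp]

lemma rmap_id (X : SSet) {n : ℕ} (x) : rmap X (𝟙 (⦋n⦌ : SimplexCategory)) x = x := by
  simp [rmap]

lemma IsSetPullback.comp_equiv {A B C C' D : Type*} {p : A → B} {q : A → C} {g : B → D}
    {h : C → D} {σ : C → C'} (hσ : Function.Bijective σ) {h' : C' → D}
    (hh : ∀ c, h' (σ c) = h c) (H : IsSetPullback p q g h) :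
    IsSetPullback p (fun a => σ (q a)) g h' := by
  obtain ⟨H1, H2⟩ := H
  refine ⟨fun a => by rw [hh]; exact H1 a, fun b c' hbc => ?_⟩
  obtain ⟨c, rfl⟩ := hσ.surjective c'
  obtain ⟨a, ⟨ha1, ha2⟩, ha3⟩ := H2 b c (by rw [← hh c]; exact hbc)
  exact ⟨a, ⟨ha1, congrArg σ ha2⟩,
    fun a' ⟨h1', h2'⟩ => ha3 a' ⟨h1', hσ.injective h2'⟩⟩

/-- The comparison morphisms `[2] ⟶ ⦋m'⦌` and `[m'] ⟶ ⦋2⦌` when `m' = 2`. -/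
def mu (m' : ℕ) (h : 2 ≤ m') : (⦋2⦌ : SimplexCategory) ⟶ ⦋m'⦌ :=
  natHom 2 m' (fun k => k) (fun _ _ hab => hab) h

def nu (m' : ℕ) (h : m' ≤ 2) : (⦋m'⦌ : SimplexCategory) ⟶ ⦋2⦌ :=
  natHom m' 2 (fun k => k) (fun _ _ hab => hab) h

/-- for a 2-Segal simplicial set `X` and its right path space
`P▷X` (with `(P▷X)_n = X_{n+1}`, `F_n = ∂_{n+1}`), the square
`((P▷X)_n, (P▷X)_{{0,n}}, X_n, X_{{0,n}})` is a pullback of sets for every `n ≥ 1`;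
explicitly, the map `X_{n+1} → X_n ×_{X_{{0,n}}} X_{{0,n,n+1}}` is a bijection. -/
theorem statement16 (X : SSet) (hX : Is2Segal X) :
    ∀ n (_ : 1 ≤ n),
      IsSetPullback
        (rmap X (natHom n (n + 1) (fun k => k) (fun _ _ hab => hab) (Nat.le_succ n)))
        (rmap X (triMap n))
        (rmap X (edge n 0 n (Nat.zero_le _) le_rfl))
        (rmap X (edge 2 0 1 (by omega) (by omega))) := by
  intro n hn
  rcases Nat.lt_or_ge n 2 with h2 | h2
  · -- n = 1 : the square is degenerate
    interval_cases n
    have hq : ∀ a, rmap X (triMap 1) a = a := by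
      intro a
      have e : triMap 1 = 𝟙 (⦋2⦌ : SimplexCategory) := by
        apply hom_ext; intro k
        have hk : (k : ℕ) < 3 := k.2
        show (if (k : ℕ) = 0 then 0 else if (k : ℕ) = 1 then 1 else 1 + 1) = (k : ℕ)
        split_ifs <;> omega
      rw [e, rmap_id]
    have hg : ∀ b, rmap X (edge 1 0 1 (Nat.zero_le _) le_rfl) b = b := by
      intro b
      have e : edge 1 0 1 (Nat.zero_le _) le_rfl = 𝟙 (⦋1⦌ : SimplexCategory) := by
        apply hom_ext; intro k
        show 0 + (k : ℕ) * (1 - 0) = (k : ℕ)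
        omega
      rw [e, rmap_id]
    have hp : ∀ a, rmap X (natHom 1 2 (fun k => k) (fun _ _ hab => hab) (Nat.le_succ 1)) a
        = rmap X (edge 2 0 1 (by omega) (by omega)) a := by
      intro a
      have e : natHom 1 2 (fun k => k) (fun _ _ hab => hab) (Nat.le_succ 1)
          = edge 2 0 1 (by omega) (by omega) := by
        apply hom_ext; intro k
        show (k : ℕ) = 0 + (k : ℕ) * (1 - 0)
        omega
      rw [e]
    refine ⟨fun a => by rw [hq, hg, hp], fun b c hbc => ?_⟩
    refine ⟨c, ⟨?_, hq c⟩, fun a' ⟨h1', h2'⟩ => by rw [← h2', hq]⟩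
    rw [hp]; rw [hg] at hbc; exact hbc.symm
  · -- n ≥ 2 : instance of the 2-Segal condition with (n+1, i = 0, j = n)
    have h0n : (0 : ℕ) < n := by omega
    have hnn1 : n ≤ n + 1 := Nat.le_succ n
    have H := hX (n + 1) 0 n (by omega) h0n hnn1
    have hμ2 : 2 ≤ n + 1 - n + 0 + 1 := by omega
    have hν2 : n + 1 - n + 0 + 1 ≤ 2 := by omega
    have hμν : ∀ x, rmap X (mu _ hμ2) (rmap X (nu _ hν2) x) = x := by
      intro x
      rw [← rmap_comp]
      have e : mu _ hμ2 ≫ nu _ hν2 = 𝟙 (⦋2⦌ : SimplexCategory) :=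
        hom_ext _ _ (fun k => rfl)
      rw [e, rmap_id]
    have hνμ : ∀ x, rmap X (nu _ hν2) (rmap X (mu _ hμ2) x) = x := by
      intro x
      rw [← rmap_comp]
      have e : nu _ hν2 ≫ mu _ hμ2 = 𝟙 (⦋n + 1 - n + 0 + 1⦌ : SimplexCategory) :=
        hom_ext _ _ (fun k => rfl)
      rw [e, rmap_id]
    have hσ : Function.Bijective (rmap X (mu _ hμ2)) :=
      Function.bijective_iff_has_inverse.mpr ⟨rmap X (nu _ hν2), hνμ, hμν⟩
    have hh : ∀ c, rmap X (edge 2 0 1 (by omega) (by omega)) (rmap X (mu _ hμ2) c)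
        = rmap X (edge (n + 1 - n + 0 + 1) 0 (0 + 1) (by omega) (by omega)) c := by
      intro c
      rw [← rmap_comp]
      have e : edge 2 0 1 (by omega) (by omega) ≫ mu _ hμ2
          = edge (n + 1 - n + 0 + 1) 0 (0 + 1) (by omega) (by omega) := by
        apply hom_ext; intro k
        show 0 + (k : ℕ) * (1 - 0) = 0 + (k : ℕ) * (0 + 1 - 0)
        omega
      rw [e]
    have H2 := H.comp_equiv hσ hh
    have hq : (fun a => rmap X (mu _ hμ2) (rmap X (outer (n + 1) 0 n h0n hnn1) a))
        = rmap X (triMap n) := by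
      funext a
      rw [← rmap_comp]
      have e : mu _ hμ2 ≫ outer (n + 1) 0 n h0n hnn1 = triMap n := by
        apply hom_ext; intro k
        have hk : (k : ℕ) < 3 := k.2
        show (if (k : ℕ) ≤ 0 then (k : ℕ) else (k : ℕ) + (n - 0 - 1))
            = if (k : ℕ) = 0 then 0 else if (k : ℕ) = 1 then n else n + 1
        split_ifs <;> omega
      rw [e]
    have hp : rmap X (interval (n + 1) 0 n h0n.le hnn1)
        = rmap X (natHom n (n + 1) (fun k => k) (fun _ _ hab => hab) (Nat.le_succ n)) := by
      have e : interval (n + 1) 0 n h0n.le hnn1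
          = natHom n (n + 1) (fun k => k) (fun _ _ hab => hab) (Nat.le_succ n) := by
        apply hom_ext; intro k
        show 0 + (k : ℕ) = (k : ℕ)
        omega
      rw [e]
    have hg : rmap X (edge (n - 0) 0 (n - 0) (Nat.zero_le _) le_rfl)
        = rmap X (edge n 0 n (Nat.zero_le _) le_rfl) := by
      have e : edge (n - 0) 0 (n - 0) (Nat.zero_le _) le_rfl
          = edge n 0 n (Nat.zero_le _) le_rfl := by
        apply hom_ext; intro k
        rfl
      rw [e]
    rw [hp, hg, hq] at H2
    exact H2


end RelSegal
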